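/- Every polyomino consisting of n unit squares has at least 2n + ⌈2√n⌉ edges. -/

import Mathlib

/-- Two lattice cells are adjacent if they share an edge. -/
def CellAdj (a b : ℤ × ℤ) : Prop :=
  (a.1 - b.1).natAbs + (a.2 - b.2).natAbs = 1

/-- A finite set of lattice cells is edge-connected. -/
def IsPolyomino (s : Finset (ℤ × ℤ)) : Prop :=
  s.Nonempty ∧ ∀ c ∈ s, ∀ d ∈ s,
    Relation.ReflTransGen (fun a b => a ∈ s ∧ b ∈ s ∧ CellAdj a b) c d

/-- The number of (unit lattice segment) edges of a polyomino, shared edges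
counted once. -/
def edgeCount (s : Finset (ℤ × ℤ)) : ℕ :=
  (s.biUnion (fun c => {(c.1, c.2), (c.1, c.2 + 1)})).card +
  (s.biUnion (fun c => {(c.1, c.2), (c.1 + 1, c.2)})).card

open Finset

lemma oneD (S : Finset ℤ) (hS : S.Nonempty) :
    S.card + 1 ≤ (S ∪ S.image (· + 1)).card := by
  have hmem : S.max' hS + 1 ∉ S := by
    intro h
    have := S.le_max' _ h
    omega
  have hsub : insert (S.max' hS + 1) S ⊆ S ∪ S.image (· + 1) := by
    intro y hy
    rcases Finset.mem_insert.1 hy with h | h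
    · subst h
      exact Finset.mem_union_right _ (Finset.mem_image.2 ⟨S.max' hS, S.max'_mem hS, rfl⟩)
    · exact Finset.mem_union_left _ h
  calc S.card + 1 = (insert (S.max' hS + 1) S).card :=
        (Finset.card_insert_of_notMem hmem).symm
    _ ≤ _ := Finset.card_le_card hsub

lemma colBound (x : ℤ) (u : Finset (ℤ × ℤ)) (hu : u.Nonempty)
    (hx : ∀ c ∈ u, c.1 = x) :
    u.card + 1 ≤ (u.biUnion fun c => ({(c.1, c.2), (c.1, c.2 + 1)} : Finset (ℤ × ℤ))).card := by
  set S := u.image Prod.snd with hS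
  have hScard : S.card = u.card := by
    apply Finset.card_image_of_injOn
    intro a ha b hb hab
    have := hx a ha; have := hx b hb
    ext <;> simp_all
  have hSne : S.Nonempty := hu.image _
  have hbi : u.biUnion (fun c => ({(c.1, c.2), (c.1, c.2 + 1)} : Finset (ℤ × ℤ)))
      = (S ∪ S.image (· + 1)).image (fun y => (x, y)) := by
    ext e
    simp only [Finset.mem_biUnion, Finset.mem_image, Finset.mem_union, Finset.mem_insert,
      Finset.mem_singleton, hS]
    constructor
    · rintro ⟨c, hc, he | he⟩
      · exact ⟨c.2, Or.inl ⟨c, hc, rfl⟩, by rw [he, hx c hc]⟩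
      · exact ⟨c.2 + 1, Or.inr ⟨c.2, ⟨c, hc, rfl⟩, rfl⟩, by rw [he, hx c hc]⟩
    · rintro ⟨y, hy | ⟨z, ⟨c, hc, rfl⟩, rfl⟩, rfl⟩
      · obtain ⟨c, hc, rfl⟩ := hy
        exact ⟨c, hc, Or.inl (by rw [hx c hc])⟩
      · exact ⟨c, hc, Or.inr (by rw [hx c hc])⟩
  rw [hbi, Finset.card_image_of_injective _ (by intro a b h; simpa using h)]
  rw [← hScard]
  exact oneD S hSne

lemma lemA (t : Finset (ℤ × ℤ)) :
    t.card + (t.image Prod.fst).card ≤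
    (t.biUnion fun c => ({(c.1, c.2), (c.1, c.2 + 1)} : Finset (ℤ × ℤ))).card := by
  set cols := t.image Prod.fst with hcols
  have hH : (t.biUnion fun c => ({(c.1, c.2), (c.1, c.2 + 1)} : Finset (ℤ × ℤ)))
      = cols.biUnion fun x => (t.filter fun c => c.1 = x).biUnion
          fun c => ({(c.1, c.2), (c.1, c.2 + 1)} : Finset (ℤ × ℤ)) := by
    ext e
    simp only [Finset.mem_biUnion, Finset.mem_filter, hcols, Finset.mem_image]
    constructor
    · rintro ⟨c, hc, he⟩
      exact ⟨c.1, ⟨c, hc, rfl⟩, c, ⟨hc, rfl⟩, he⟩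
    · rintro ⟨x, -, c, ⟨hc, -⟩, he⟩
      exact ⟨c, hc, he⟩
  rw [hH]
  have hmemcoord : ∀ x : ℤ, ∀ e ∈ (t.filter fun c => c.1 = x).biUnion
      (fun c => ({(c.1, c.2), (c.1, c.2 + 1)} : Finset (ℤ × ℤ))), e.1 = x := by
    intro x e he
    simp only [Finset.mem_biUnion, Finset.mem_filter, Finset.mem_insert,
      Finset.mem_singleton] at he
    obtain ⟨c, ⟨-, hcx⟩, he | he⟩ := he <;> rw [he] <;> exact hcx
  rw [Finset.card_biUnion]
  · have hcard : t.card = ∑ x ∈ cols, (t.filter fun c => c.1 = x).card :=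
      Finset.card_eq_sum_card_fiberwise (fun c hc => Finset.mem_image_of_mem _ hc)
    have : cols.card = ∑ _x ∈ cols, 1 := by simp
    rw [hcard, this, ← Finset.sum_add_distrib]
    apply Finset.sum_le_sum
    intro x hx
    obtain ⟨c, hc, rfl⟩ := Finset.mem_image.1 hx
    apply colBound c.1
    · exact ⟨c, Finset.mem_filter.2 ⟨hc, rfl⟩⟩
    · intro d hd; exact (Finset.mem_filter.1 hd).2
  · intro x hx y hy hxy
    rw [Function.onFun, Finset.disjoint_left]
    intro e hex hey
    exact hxy ((hmemcoord x e hex) ▸ (hmemcoord y e hey) ▸ rfl)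

lemma lemB (t : Finset (ℤ × ℤ)) :
    t.card + (t.image Prod.snd).card ≤
    (t.biUnion fun c => ({(c.1, c.2), (c.1 + 1, c.2)} : Finset (ℤ × ℤ))).card := by
  have h := lemA (t.image Prod.swap)
  have h1 : (t.image Prod.swap).card = t.card :=
    Finset.card_image_of_injective _ Prod.swap_injective
  have h2 : (t.image Prod.swap).image Prod.fst = t.image Prod.snd := by
    rw [Finset.image_image]; rfl
  have h3 : ((t.image Prod.swap).biUnion fun c =>
      ({(c.1, c.2), (c.1, c.2 + 1)} : Finset (ℤ × ℤ)))
      = (t.biUnion fun c => ({(c.1, c.2), (c.1 + 1, c.2)} : Finset (ℤ × ℤ))).image Prod.swap := by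
    ext e
    simp only [Finset.mem_biUnion, Finset.mem_image, Finset.mem_insert, Finset.mem_singleton]
    constructor
    · rintro ⟨c', ⟨c, hc, rfl⟩, he | he⟩
      · exact ⟨(c.1, c.2), ⟨c, hc, Or.inl rfl⟩, by subst he; rfl⟩
      · exact ⟨(c.1 + 1, c.2), ⟨c, hc, Or.inr rfl⟩, by subst he; rfl⟩
    · rintro ⟨e', ⟨c, hc, he | he⟩, rfl⟩
      · exact ⟨c.swap, ⟨c, hc, rfl⟩, Or.inl (by subst he; rfl)⟩
      · exact ⟨c.swap, ⟨c, hc, rfl⟩, Or.inr (by subst he; rfl)⟩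
  rw [h1, h2, h3, Finset.card_image_of_injective _ Prod.swap_injective] at h
  exact h

/-- Every polyomino with `n` unit squares has at least `2n + ⌈2√n⌉` edges. -/
theorem min_edges_polyomino (n : ℕ) (hn : 1 ≤ n)
    (s : Finset (ℤ × ℤ)) (hcard : s.card = n) (hpoly : IsPolyomino s) :
    2 * (n : ℤ) + ⌈2 * Real.sqrt n⌉ ≤ (edgeCount s : ℤ) := by
  obtain ⟨hne, -⟩ := hpoly
  set w := (s.image Prod.fst).card with hw
  set h := (s.image Prod.snd).card with hh
  have hw1 : 1 ≤ w := Finset.card_pos.2 (hne.image _)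
  have hh1 : 1 ≤ h := Finset.card_pos.2 (hne.image _)
  have hnwh : n ≤ w * h := by
    rw [← hcard]
    calc s.card ≤ ((s.image Prod.fst) ×ˢ (s.image Prod.snd)).card := by
          apply Finset.card_le_card
          intro c hc
          exact Finset.mem_product.2 ⟨Finset.mem_image_of_mem _ hc, Finset.mem_image_of_mem _ hc⟩
      _ = w * h := Finset.card_product _ _
  have hA := lemA s
  have hB := lemB s
  have hE : n + w + (n + h) ≤ edgeCount s := by
    unfold edgeCount
    rw [← hcard]
    omega
  have hceil : (⌈2 * Real.sqrt n⌉ : ℤ) ≤ (w : ℤ) + h := by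
    apply Int.ceil_le.2
    push_cast
    have ha : Real.sqrt n ^ 2 = n := Real.sq_sqrt (by positivity)
    have ha0 : (0:ℝ) ≤ Real.sqrt n := Real.sqrt_nonneg _
    have hwh : (n : ℝ) ≤ (w : ℝ) * h := by exact_mod_cast hnwh
    have hw1' : (1:ℝ) ≤ w := by exact_mod_cast hw1
    have hh1' : (1:ℝ) ≤ h := by exact_mod_cast hh1
    nlinarith [sq_nonneg ((w:ℝ) - h), sq_nonneg ((w:ℝ) + h - 2 * Real.sqrt n)]
  have : (n : ℤ) + w + (n + h) ≤ (edgeCount s : ℤ) := by exact_mod_cast hE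
  omega
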